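/- Let (X,Y) be random vectors of i.i.d. pairs and (U,V) quantized versions with E[(1/n)∑(Xᵢ-Uᵢ)²] ≤ D₁, E[(1/n)∑(Yᵢ-Vᵢ)²] ≤ D₂, where each Xᵢ, Yᵢ has zero mean and unit variance. Then E|(1/n)∑XᵢYᵢ - (1/n)∑UᵢVᵢ| ≤ √D₁ + √D₂ + √(D₁D₂). -/

import Mathlib

open MeasureTheory ProbabilityTheory

section Aux

variable {Ω : Type*} [MeasurableSpace Ω] {P : Measure Ω}

lemma aux_integrable_mul {f g : Ω → ℝ} (hf : MemLp f 2 P) (hg : MemLp g 2 P) :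
    Integrable (fun ω => f ω * g ω) P := by
  refine ((hf.integrable_sq.add hg.integrable_sq).div_const 2).mono'
    (hf.aestronglyMeasurable.mul hg.aestronglyMeasurable)
    (Filter.Eventually.of_forall fun ω => ?_)
  rw [Real.norm_eq_abs, abs_mul]
  simp only [Pi.add_apply]
  nlinarith [sq_nonneg (|f ω| - |g ω|), sq_abs (f ω), sq_abs (g ω), abs_nonneg (f ω),
    abs_nonneg (g ω)]

lemma aux_integrable_sqrt_mul {a b : Ω → ℝ} (ha : Integrable a P) (hb : Integrable b P)
    (ha0 : ∀ ω, 0 ≤ a ω) (hb0 : ∀ ω, 0 ≤ b ω) :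
    Integrable (fun ω => Real.sqrt (a ω) * Real.sqrt (b ω)) P := by
  refine ((ha.add hb).div_const 2).mono'
    ((Real.continuous_sqrt.comp_aestronglyMeasurable ha.1).mul
      (Real.continuous_sqrt.comp_aestronglyMeasurable hb.1))
    (Filter.Eventually.of_forall fun ω => ?_)
  rw [Real.norm_eq_abs, abs_of_nonneg (mul_nonneg (Real.sqrt_nonneg _) (Real.sqrt_nonneg _))]
  simp only [Pi.add_apply]
  nlinarith [Real.sq_sqrt (ha0 ω), Real.sq_sqrt (hb0 ω),
    sq_nonneg (Real.sqrt (a ω) - Real.sqrt (b ω))]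

/-- Cauchy–Schwarz for expectations of square roots. -/
lemma aux_cs_integral {a b : Ω → ℝ} (ha : Integrable a P) (hb : Integrable b P)
    (ha0 : ∀ ω, 0 ≤ a ω) (hb0 : ∀ ω, 0 ≤ b ω) :
    ∫ ω, Real.sqrt (a ω) * Real.sqrt (b ω) ∂P
      ≤ Real.sqrt ((∫ ω, a ω ∂P) * (∫ ω, b ω ∂P)) := by
  set Ia := ∫ ω, a ω ∂P with hIa
  set Ib := ∫ ω, b ω ∂P with hIb
  have hIa0 : 0 ≤ Ia := integral_nonneg ha0
  have hIb0 : 0 ≤ Ib := integral_nonneg hb0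
  rcases eq_or_lt_of_le hIa0 with h0 | hIap
  · -- Ia = 0, so a = 0 a.e.
    have haz : a =ᵐ[P] 0 := (integral_eq_zero_iff_of_nonneg ha0 ha).1 h0.symm
    have : (fun ω => Real.sqrt (a ω) * Real.sqrt (b ω)) =ᵐ[P] 0 := by
      filter_upwards [haz] with ω hω
      simp [hω]
    rw [integral_congr_ae this]
    simp [Real.sqrt_nonneg]
  rcases eq_or_lt_of_le hIb0 with h0 | hIbp
  · have hbz : b =ᵐ[P] 0 := (integral_eq_zero_iff_of_nonneg hb0 hb).1 h0.symm
    have : (fun ω => Real.sqrt (a ω) * Real.sqrt (b ω)) =ᵐ[P] 0 := by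
      filter_upwards [hbz] with ω hω
      simp [hω]
    rw [integral_congr_ae this]
    simp [Real.sqrt_nonneg]
  -- both positive
  set ε := Real.sqrt (Ib / Ia) with hε
  have hεpos : 0 < ε := Real.sqrt_pos.2 (div_pos hIbp hIap)
  have hpt : ∀ ω, Real.sqrt (a ω) * Real.sqrt (b ω) ≤ (ε * a ω + b ω / ε) / 2 := by
    intro ω
    rw [le_div_iff₀ (by norm_num : (0:ℝ) < 2), ← mul_le_mul_iff_of_pos_right hεpos]
    have hbe : b ω / ε * ε = b ω := div_mul_cancel₀ _ hεpos.ne'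
    have h1 : ε ^ 2 * a ω = (ε * Real.sqrt (a ω)) ^ 2 := by
      rw [mul_pow, Real.sq_sqrt (ha0 ω)]
    have h2 : b ω = (Real.sqrt (b ω)) ^ 2 := (Real.sq_sqrt (hb0 ω)).symm
    nlinarith [sq_nonneg (ε * Real.sqrt (a ω) - Real.sqrt (b ω)), h1, h2, hbe]
  have hint : ∫ ω, Real.sqrt (a ω) * Real.sqrt (b ω) ∂P
      ≤ ∫ ω, (ε * a ω + b ω / ε) / 2 ∂P := by
    refine integral_mono (aux_integrable_sqrt_mul ha hb ha0 hb0)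
      (((ha.const_mul ε).add (hb.div_const ε)).div_const 2) hpt
  refine hint.trans ?_
  have hval : ∫ ω, (ε * a ω + b ω / ε) / 2 ∂P = (ε * Ia + Ib / ε) / 2 := by
    rw [integral_div, integral_add (ha.const_mul ε) (hb.div_const ε), integral_const_mul,
      integral_div]
  rw [hval]
  have hsa : Real.sqrt Ia ^ 2 = Ia := Real.sq_sqrt hIa0
  have hsb : Real.sqrt Ib ^ 2 = Ib := Real.sq_sqrt hIb0
  have hsap : 0 < Real.sqrt Ia := Real.sqrt_pos.2 hIap
  have hsbp : 0 < Real.sqrt Ib := Real.sqrt_pos.2 hIbp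
  have hεval : ε = Real.sqrt Ib / Real.sqrt Ia := by
    rw [hε, Real.sqrt_div hIb0 Ia]
  have h1 : ε * Ia = Real.sqrt Ia * Real.sqrt Ib := by
    rw [hεval]; field_simp; nlinarith [hsa]
  have h2 : Ib / ε = Real.sqrt Ia * Real.sqrt Ib := by
    rw [hεval]; field_simp; nlinarith [hsb]
  rw [Real.sqrt_mul hIa0, h1, h2]
  linarith

lemma aux_abs_sum_cs {n : ℕ} (f g : Fin n → ℝ) :
    |∑ i, f i * g i| ≤ Real.sqrt (∑ i, f i ^ 2) * Real.sqrt (∑ i, g i ^ 2) := by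
  rcases abs_cases (∑ i, f i * g i) with ⟨h, _⟩ | ⟨h, _⟩
  · rw [h]; exact Real.sum_mul_le_sqrt_mul_sqrt _ _ _
  · rw [h]
    have h := Real.sum_mul_le_sqrt_mul_sqrt Finset.univ f (fun i => -g i)
    simp only [mul_neg, Finset.sum_neg_distrib, neg_sq] at h
    linarith

lemma aux_sqrt_scale (c s t : ℝ) (hc : 0 ≤ c) :
    Real.sqrt (c * s) * Real.sqrt (c * t) = c * (Real.sqrt s * Real.sqrt t) := by
  rw [Real.sqrt_mul hc, Real.sqrt_mul hc]
  calc Real.sqrt c * Real.sqrt s * (Real.sqrt c * Real.sqrt t)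
      = Real.sqrt c * Real.sqrt c * (Real.sqrt s * Real.sqrt t) := by ring
    _ = c * (Real.sqrt s * Real.sqrt t) := by rw [Real.mul_self_sqrt hc]

end Aux

/-- expected sample-correlation perturbation bound (Theorem 2 of the
paper). `(Xᵢ,Yᵢ)` are i.i.d. with zero means and unit variances, and `Uᵢ, Vᵢ` are
quantized versions satisfying expected-distortion constraints `D₁, D₂`. -/
theorem expected_correlation_perturbation
    {Ω : Type*} [MeasurableSpace Ω] (P : Measure Ω) [IsProbabilityMeasure P]
    (n : ℕ) (hn : 0 < n) (X Y U V : Fin n → Ω → ℝ)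
    (hX2 : ∀ i, MemLp (X i) 2 P) (hY2 : ∀ i, MemLp (Y i) 2 P)
    (hU2 : ∀ i, MemLp (U i) 2 P) (hV2 : ∀ i, MemLp (V i) 2 P)
    (hiid : ∀ i j, Measure.map (fun ω => (X i ω, Y i ω)) P
              = Measure.map (fun ω => (X j ω, Y j ω)) P)
    (hXmean : ∀ i, ∫ ω, X i ω ∂P = 0) (hYmean : ∀ i, ∫ ω, Y i ω ∂P = 0)
    (hXvar : ∀ i, ∫ ω, (X i ω) ^ 2 ∂P = 1) (hYvar : ∀ i, ∫ ω, (Y i ω) ^ 2 ∂P = 1)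
    (D₁ D₂ : ℝ)
    (hD₁ : ∫ ω, (1 / (n:ℝ)) * ∑ i, (X i ω - U i ω) ^ 2 ∂P ≤ D₁)
    (hD₂ : ∫ ω, (1 / (n:ℝ)) * ∑ i, (Y i ω - V i ω) ^ 2 ∂P ≤ D₂) :
    ∫ ω, |(1 / (n:ℝ)) * ∑ i, X i ω * Y i ω - (1 / (n:ℝ)) * ∑ i, U i ω * V i ω| ∂P
      ≤ Real.sqrt D₁ + Real.sqrt D₂ + Real.sqrt (D₁ * D₂) := by
  have hnR : (0:ℝ) < n := Nat.cast_pos.2 hn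
  have hnn : (0:ℝ) ≤ 1 / n := by positivity
  set A : Ω → ℝ := fun ω => (1 / (n:ℝ)) * ∑ i, (X i ω) ^ 2 with hA
  set Q : Ω → ℝ := fun ω => (1 / (n:ℝ)) * ∑ i, (Y i ω) ^ 2 with hQ
  set C : Ω → ℝ := fun ω => (1 / (n:ℝ)) * ∑ i, (X i ω - U i ω) ^ 2 with hC
  set B : Ω → ℝ := fun ω => (1 / (n:ℝ)) * ∑ i, (Y i ω - V i ω) ^ 2 with hB
  have hA0 : ∀ ω, 0 ≤ A ω := fun ω => by positivity
  have hQ0 : ∀ ω, 0 ≤ Q ω := fun ω => by positivity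
  have hC0 : ∀ ω, 0 ≤ C ω := fun ω => by positivity
  have hB0 : ∀ ω, 0 ≤ B ω := fun ω => by positivity
  have hXU2 : ∀ i, MemLp (fun ω => X i ω - U i ω) 2 P := fun i => (hX2 i).sub (hU2 i)
  have hYV2 : ∀ i, MemLp (fun ω => Y i ω - V i ω) 2 P := fun i => (hY2 i).sub (hV2 i)
  have hAint : Integrable A P :=
    (integrable_finset_sum _ fun i _ => (hX2 i).integrable_sq).const_mul _
  have hQint : Integrable Q P :=
    (integrable_finset_sum _ fun i _ => (hY2 i).integrable_sq).const_mul _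
  have hCint : Integrable C P :=
    (integrable_finset_sum _ fun i _ => (hXU2 i).integrable_sq).const_mul _
  have hBint : Integrable B P :=
    (integrable_finset_sum _ fun i _ => (hYV2 i).integrable_sq).const_mul _
  -- pointwise bound
  have hpt : ∀ ω, |(1 / (n:ℝ)) * ∑ i, X i ω * Y i ω - (1 / (n:ℝ)) * ∑ i, U i ω * V i ω|
      ≤ Real.sqrt (A ω) * Real.sqrt (B ω) + Real.sqrt (C ω) * Real.sqrt (Q ω)
        + Real.sqrt (C ω) * Real.sqrt (B ω) := by
    intro ω
    have hdecomp : ∑ i, X i ω * Y i ω - ∑ i, U i ω * V i ω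
        = (∑ i, X i ω * (Y i ω - V i ω)) + (∑ i, (X i ω - U i ω) * Y i ω)
          - ∑ i, (X i ω - U i ω) * (Y i ω - V i ω) := by
      rw [← Finset.sum_add_distrib, ← Finset.sum_sub_distrib, ← Finset.sum_sub_distrib]
      exact Finset.sum_congr rfl fun i _ => by ring
    have h1 : |∑ i, X i ω * (Y i ω - V i ω)|
        ≤ Real.sqrt (∑ i, (X i ω) ^ 2) * Real.sqrt (∑ i, (Y i ω - V i ω) ^ 2) :=
      aux_abs_sum_cs _ _
    have h2 : |∑ i, (X i ω - U i ω) * Y i ω|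
        ≤ Real.sqrt (∑ i, (X i ω - U i ω) ^ 2) * Real.sqrt (∑ i, (Y i ω) ^ 2) :=
      aux_abs_sum_cs _ _
    have h3 : |∑ i, (X i ω - U i ω) * (Y i ω - V i ω)|
        ≤ Real.sqrt (∑ i, (X i ω - U i ω) ^ 2) * Real.sqrt (∑ i, (Y i ω - V i ω) ^ 2) :=
      aux_abs_sum_cs _ _
    have key : |(1 / (n:ℝ)) * ∑ i, X i ω * Y i ω - (1 / (n:ℝ)) * ∑ i, U i ω * V i ω|
        = (1 / (n:ℝ)) * |∑ i, X i ω * Y i ω - ∑ i, U i ω * V i ω| := by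
      rw [← mul_sub, abs_mul, abs_of_nonneg hnn]
    rw [key, hdecomp, hA, hB, hC, hQ]
    rw [aux_sqrt_scale _ _ _ hnn, aux_sqrt_scale _ _ _ hnn, aux_sqrt_scale _ _ _ hnn]
    calc (1 / (n:ℝ)) * |(∑ i, X i ω * (Y i ω - V i ω)) + (∑ i, (X i ω - U i ω) * Y i ω)
          - ∑ i, (X i ω - U i ω) * (Y i ω - V i ω)|
        ≤ (1 / (n:ℝ)) * (|∑ i, X i ω * (Y i ω - V i ω)| + |∑ i, (X i ω - U i ω) * Y i ω|
          + |∑ i, (X i ω - U i ω) * (Y i ω - V i ω)|) := by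
          refine mul_le_mul_of_nonneg_left ?_ hnn
          calc |(∑ i, X i ω * (Y i ω - V i ω)) + (∑ i, (X i ω - U i ω) * Y i ω)
              - ∑ i, (X i ω - U i ω) * (Y i ω - V i ω)|
              ≤ |(∑ i, X i ω * (Y i ω - V i ω)) + (∑ i, (X i ω - U i ω) * Y i ω)|
                + |∑ i, (X i ω - U i ω) * (Y i ω - V i ω)| := abs_sub _ _
            _ ≤ _ := by
                have := abs_add_le (∑ i, X i ω * (Y i ω - V i ω)) (∑ i, (X i ω - U i ω) * Y i ω)
                linarith
      _ ≤ _ := by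
          have := mul_le_mul_of_nonneg_left (add_le_add (add_le_add h1 h2) h3) hnn
          linarith [this]
  -- integrability of the LHS integrand
  have hLHSint : Integrable (fun ω =>
      |(1 / (n:ℝ)) * ∑ i, X i ω * Y i ω - (1 / (n:ℝ)) * ∑ i, U i ω * V i ω|) P := by
    refine Integrable.abs ?_
    exact (((integrable_finset_sum _ fun i _ =>
        aux_integrable_mul (hX2 i) (hY2 i)).const_mul _).sub
      ((integrable_finset_sum _ fun i _ =>
        aux_integrable_mul (hU2 i) (hV2 i)).const_mul _))
  have hAB : Integrable (fun ω => Real.sqrt (A ω) * Real.sqrt (B ω)) P :=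
    aux_integrable_sqrt_mul hAint hBint hA0 hB0
  have hCQ : Integrable (fun ω => Real.sqrt (C ω) * Real.sqrt (Q ω)) P :=
    aux_integrable_sqrt_mul hCint hQint hC0 hQ0
  have hCB : Integrable (fun ω => Real.sqrt (C ω) * Real.sqrt (B ω)) P :=
    aux_integrable_sqrt_mul hCint hBint hC0 hB0
  have step1 : ∫ ω, |(1 / (n:ℝ)) * ∑ i, X i ω * Y i ω - (1 / (n:ℝ)) * ∑ i, U i ω * V i ω| ∂P
      ≤ ∫ ω, (Real.sqrt (A ω) * Real.sqrt (B ω) + Real.sqrt (C ω) * Real.sqrt (Q ω)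
        + Real.sqrt (C ω) * Real.sqrt (B ω)) ∂P :=
    integral_mono hLHSint ((hAB.add hCQ).add hCB) hpt
  have hsum1 : Integrable (fun ω => Real.sqrt (A ω) * Real.sqrt (B ω)
      + Real.sqrt (C ω) * Real.sqrt (Q ω)) P := hAB.add hCQ
  rw [integral_add hsum1 hCB, integral_add hAB hCQ] at step1
  -- moments
  have hIA : ∫ ω, A ω ∂P = 1 := by
    rw [hA]
    simp only
    rw [integral_const_mul, integral_finset_sum _ fun i _ => (hX2 i).integrable_sq]
    simp only [hXvar, Finset.sum_const, Finset.card_univ, Fintype.card_fin, smul_eq_mul, mul_one]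
    field_simp
    exact nsmul_one n
  have hIQ : ∫ ω, Q ω ∂P = 1 := by
    rw [hQ]
    simp only
    rw [integral_const_mul, integral_finset_sum _ fun i _ => (hY2 i).integrable_sq]
    simp only [hYvar, Finset.sum_const, Finset.card_univ, Fintype.card_fin, smul_eq_mul, mul_one]
    field_simp
    exact nsmul_one n
  have hIC0 : 0 ≤ ∫ ω, C ω ∂P := integral_nonneg hC0
  have hIB0 : 0 ≤ ∫ ω, B ω ∂P := integral_nonneg hB0
  have hICD : ∫ ω, C ω ∂P ≤ D₁ := hD₁
  have hIBD : ∫ ω, B ω ∂P ≤ D₂ := hD₂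
  have e1 : ∫ ω, Real.sqrt (A ω) * Real.sqrt (B ω) ∂P ≤ Real.sqrt D₂ := by
    refine (aux_cs_integral hAint hBint hA0 hB0).trans ?_
    rw [hIA, one_mul]
    exact Real.sqrt_le_sqrt hIBD
  have e2 : ∫ ω, Real.sqrt (C ω) * Real.sqrt (Q ω) ∂P ≤ Real.sqrt D₁ := by
    refine (aux_cs_integral hCint hQint hC0 hQ0).trans ?_
    rw [hIQ, mul_one]
    exact Real.sqrt_le_sqrt hICD
  have e3 : ∫ ω, Real.sqrt (C ω) * Real.sqrt (B ω) ∂P ≤ Real.sqrt (D₁ * D₂) := by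
    refine (aux_cs_integral hCint hBint hC0 hB0).trans ?_
    exact Real.sqrt_le_sqrt (mul_le_mul hICD hIBD hIB0 (hIC0.trans hICD))
  linarith
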